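/- Let g : ℕ → ℕ satisfy g(2n) = 4g(n), g(2n+1) = g(2n)+1. Then the map (a,b) ↦ 1 + 2g(a) + 4g(b) is an injection from ℕ × ℕ into the positive odd integers, and moreover it is a bijection onto the positive odd integers. -/
import Mathlib


/-- Let `g : ℕ → ℕ` satisfy `g(0) = 0`, `g(2n) = 4·g(n)`, `g(2n+1) = g(2n) + 1`.
Then `(a,b) ↦ 1 + 2·g(a) + 4·g(b)` is an injection of `ℕ × ℕ` into the positive odd
integers, and is moreover a bijection onto the positive odd integers. -/
theorem stmt10 (g : ℕ → ℕ) (h0 : g 0 = 0)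
    (heven : ∀ n, g (2 * n) = 4 * g n)
    (hodd : ∀ n, g (2 * n + 1) = g (2 * n) + 1) :
    Function.Injective (fun p : ℕ × ℕ => 1 + 2 * g p.1 + 4 * g p.2) ∧
    (∀ p : ℕ × ℕ, Odd (1 + 2 * g p.1 + 4 * g p.2) ∧ 0 < 1 + 2 * g p.1 + 4 * g p.2) ∧
    (∀ m : ℕ, Odd m → 0 < m → ∃ p : ℕ × ℕ, 1 + 2 * g p.1 + 4 * g p.2 = m) := by
  -- recursion formula
  have hg : ∀ n, g n = 4 * g (n / 2) + n % 2 := by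
    intro n
    rcases Nat.even_or_odd n with ⟨k, hk⟩ | ⟨k, hk⟩
    · subst hk
      have h1 : k + k = 2 * k := by ring
      rw [h1]
      have := heven k
      have h2 : (2 * k) / 2 = k := by omega
      have h3 : (2 * k) % 2 = 0 := by omega
      rw [h2, h3]
      omega
    · subst hk
      have h1 := hodd k
      have h2 := heven k
      have h3 : (2 * k + 1) / 2 = k := by omega
      have h4 : (2 * k + 1) % 2 = 1 := by omega
      rw [h3, h4]
      omega
  have gzero : ∀ n, g n = 0 → n = 0 := by
    intro n
    induction n using Nat.strong_induction_on with
    | _ n ih =>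
      intro hgn
      rcases Nat.eq_zero_or_pos n with h | h
      · exact h
      · have := hg n
        have h1 : g (n / 2) = 0 := by omega
        have h2 : n / 2 = 0 := ih (n / 2) (by omega) h1
        omega
  -- injectivity of G(a,b) = g a + 2 g b
  have keyinj : ∀ N a b a' b', g a + 2 * g b = N → g a' + 2 * g b' = N →
      a = a' ∧ b = b' := by
    intro N
    induction N using Nat.strong_induction_on with
    | _ N ih =>
      intro a b a' b' h1 h2
      rcases Nat.eq_zero_or_pos N with hN | hN
      · subst hN
        have := gzero a (by omega)
        have := gzero b (by omega)
        have := gzero a' (by omega)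
        have := gzero b' (by omega)
        omega
      · have ha := hg a
        have ha' := hg a'
        have e1 : g b + 2 * g (a / 2) = N / 2 := by omega
        have e2 : g b' + 2 * g (a' / 2) = N / 2 := by omega
        obtain ⟨hb, hdiv⟩ := ih (N / 2) (by omega) b (a / 2) b' (a' / 2) e1 e2
        constructor
        · omega
        · exact hb
  -- surjectivity of G
  have keysurj : ∀ N, ∃ a b, g a + 2 * g b = N := by
    intro N
    induction N using Nat.strong_induction_on with
    | _ N ih =>
      rcases Nat.eq_zero_or_pos N with hN | hN
      · exact ⟨0, 0, by omega⟩
      · obtain ⟨b, a₁, hba⟩ := ih (N / 2) (by omega)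
        refine ⟨2 * a₁ + N % 2, b, ?_⟩
        have : g (2 * a₁ + N % 2) = 4 * g a₁ + N % 2 := by
          have := hg (2 * a₁ + N % 2)
          have h1 : (2 * a₁ + N % 2) / 2 = a₁ := by omega
          have h2 : (2 * a₁ + N % 2) % 2 = N % 2 := by omega
          rw [h1, h2] at this
          exact this
        omega
  refine ⟨?_, ?_, ?_⟩
  · intro p q h
    simp only at h
    have h' : g p.1 + 2 * g p.2 = g q.1 + 2 * g q.2 := by omega
    obtain ⟨h1, h2⟩ := keyinj (g q.1 + 2 * g q.2) p.1 p.2 q.1 q.2 h' rfl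
    exact Prod.ext h1 h2
  · intro p
    exact ⟨⟨g p.1 + 2 * g p.2, by ring⟩, by omega⟩
  · intro m hm hpos
    obtain ⟨k, hk⟩ := hm
    obtain ⟨a, b, hab⟩ := keysurj k
    exact ⟨(a, b), show 1 + 2 * g a + 4 * g b = m by omega⟩
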